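/- Suppose Alice's measurements {M_{a|x}} have a compatibility structure containing the star graph K_{1,m-1}(x*) (measurement x* is pairwise compatible with every other measurement), and ρ_AB is a bipartite state. Define the observed assemblage σ^obs_{a|x} := Tr_A[(M_{a|x} ⊗ 𝕀)ρ_AB]. Then for each edge (x*, x) there exist positive semidefinite operators τ^x_μ (indexed by deterministic response functions μ: {x*,x} → ℤ_d) on Bob's space, with Σ_μ Tr(τ^x_μ) = 1, such that σ^obs_{a|z} = Σ_μ δ_{a,μ(z)} τ^x_μ for z ∈ {x*, x}; i.e. the assemblage is K_{1,m-1}(x*)-partially-unsteerable. -/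

import Mathlib

open scoped BigOperators ComplexOrder
open Matrix

/-- Bob's conditional (unnormalized) state `Tr_A[(M ⊗ 𝕀)ρ]` for a measurement operator
`M` on Alice's space and a bipartite state `ρ`. -/
noncomputable def assemblageOf {nA nB : ℕ} (M : Matrix (Fin nA) (Fin nA) ℂ)
    (ρ : Matrix (Fin nA × Fin nB) (Fin nA × Fin nB) ℂ) : Matrix (Fin nB) (Fin nB) ℂ :=
  Matrix.of fun b b' => ∑ i : Fin nA, ∑ j : Fin nA, M i j * ρ (j, b) (i, b')

private lemma sum_comm3 {M : Type*} [AddCommMonoid M] {α β γ : Type*}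
    [Fintype α] [Fintype β] [Fintype γ] (g : α → β → γ → M) :
    ∑ i : α, ∑ j : β, ∑ k : γ, g i j k = ∑ k : γ, ∑ i : α, ∑ j : β, g i j k := by
  calc ∑ i : α, ∑ j : β, ∑ k : γ, g i j k
      = ∑ i : α, ∑ k : γ, ∑ j : β, g i j k :=
        Finset.sum_congr rfl fun _ _ => Finset.sum_comm
    _ = ∑ k : γ, ∑ i : α, ∑ j : β, g i j k := Finset.sum_comm

private lemma sum_comm4 {M : Type*} [AddCommMonoid M] {α β γ δ : Type*}
    [Fintype α] [Fintype β] [Fintype γ] [Fintype δ] (g : α → β → γ → δ → M) :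
    ∑ i : α, ∑ j : β, ∑ k : γ, ∑ p : δ, g i j k p
      = ∑ k : γ, ∑ p : δ, ∑ j : β, ∑ i : α, g i j k p := by
  rw [sum_comm3 (g := fun i j k => ∑ p, g i j k p)]
  refine Finset.sum_congr rfl fun k _ => ?_
  rw [sum_comm3 (g := fun i j p => g i j k p)]
  exact Finset.sum_congr rfl fun p _ => Finset.sum_comm

private lemma sum_boolFun {α : Type*} [Fintype α] {M : Type*} [AddCommMonoid M]
    (f : (Bool → α) → M) :
    ∑ μ : Bool → α, f μ = ∑ u : α, ∑ v : α, f (fun z => bif z then v else u) := by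
  exact (Fintype.sum_equiv (Equiv.boolArrowEquivProd α) _
    (fun p => f (fun z => bif z then p.2 else p.1))
    (fun μ => by congr 1; funext z; cases z <;> rfl)).trans (Fintype.sum_prod_type _)

private lemma assemblageOf_sum_smul {nA nB L : ℕ} (c : Fin L → ℂ)
    (G : Fin L → Matrix (Fin nA) (Fin nA) ℂ)
    (ρ : Matrix (Fin nA × Fin nB) (Fin nA × Fin nB) ℂ) :
    assemblageOf (∑ lam, c lam • G lam) ρ = ∑ lam, c lam • assemblageOf (G lam) ρ := by
  ext b b'
  simp only [assemblageOf, Matrix.of_apply, Matrix.sum_apply, Matrix.smul_apply,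
    smul_eq_mul, Finset.sum_mul, Finset.mul_sum, mul_assoc]
  rw [sum_comm3 (g := fun i j lam => c lam * (G lam i j * ρ (j, b) (i, b')))]

private lemma assemblageOf_posSemidef {nA nB : ℕ} {G : Matrix (Fin nA) (Fin nA) ℂ}
    {ρ : Matrix (Fin nA × Fin nB) (Fin nA × Fin nB) ℂ}
    (hG : G.PosSemidef) (hρ : ρ.PosSemidef) : (assemblageOf G ρ).PosSemidef := by
  obtain ⟨C, hC⟩ : ∃ C, _ = Cᴴ * C := by
    open scoped MatrixOrder in
    obtain ⟨X, hX⟩ := CStarAlgebra.nonneg_iff_eq_star_mul_self.mp hG.nonneg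
    exact ⟨X, hX⟩
  obtain ⟨B, hB⟩ : ∃ B, _ = Bᴴ * B := by
    open scoped MatrixOrder in
    obtain ⟨X, hX⟩ := CStarAlgebra.nonneg_iff_eq_star_mul_self.mp hρ.nonneg
    exact ⟨X, hX⟩
  set W : Matrix (Fin nA × (Fin nA × Fin nB)) (Fin nB) ℂ :=
    Matrix.of (fun q b => ∑ j, star (C q.1 j) * B q.2 (j, b)) with hW
  have key : assemblageOf G ρ = Wᴴ * W := by
    ext b b'
    have hR : (Wᴴ * W) b b' = ∑ k : Fin nA, ∑ p : Fin nA × Fin nB,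
        star (W (k, p) b) * W (k, p) b' := by
      rw [Matrix.mul_apply, Fintype.sum_prod_type]
      simp [Matrix.conjTranspose_apply]
    rw [hR]
    simp only [assemblageOf, Matrix.of_apply, hC, hB, Matrix.mul_apply,
      Matrix.conjTranspose_apply, Finset.sum_mul, Finset.mul_sum, hW, star_sum, star_mul',
      star_star]
    rw [sum_comm4 (g := fun i j p k => star (C k i) * C k j *
      (star (B p (j, b)) * B p (i, b'))), Finset.sum_comm]
    refine Finset.sum_congr rfl fun k _ => Finset.sum_congr rfl fun p _ => ?_
    rw [Finset.sum_comm]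
    exact Finset.sum_congr rfl fun j _ => Finset.sum_congr rfl fun i _ => by ring
  rw [key]
  exact Matrix.posSemidef_conjTranspose_mul_self W

private lemma assemblageOf_one_trace {nA nB : ℕ}
    (ρ : Matrix (Fin nA × Fin nB) (Fin nA × Fin nB) ℂ) :
    (assemblageOf (1 : Matrix (Fin nA) (Fin nA) ℂ) ρ).trace = ρ.trace := by
  simp only [Matrix.trace, Matrix.diag, assemblageOf, Matrix.of_apply, Matrix.one_apply,
    ite_mul, one_mul, zero_mul, Finset.sum_ite_eq, Finset.mem_univ, if_true,
    Fintype.sum_prod_type]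
  exact Finset.sum_comm

private lemma posSemidef_real_smul {n : ℕ} {A : Matrix (Fin n) (Fin n) ℂ}
    (hA : A.PosSemidef) {c : ℝ} (hc : 0 ≤ c) : ((c : ℂ) • A).PosSemidef := by
  obtain ⟨B, rfl⟩ : ∃ B, _ = Bᴴ * B := by
    open scoped MatrixOrder in
    obtain ⟨X, hX⟩ := CStarAlgebra.nonneg_iff_eq_star_mul_self.mp hA.nonneg
    exact ⟨X, hX⟩
  have h : (c : ℂ) • (Bᴴ * B)
      = ((Real.sqrt c : ℂ) • B)ᴴ * ((Real.sqrt c : ℂ) • B) := by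
    rw [Matrix.conjTranspose_smul, Matrix.smul_mul, Matrix.mul_smul, smul_smul]
    congr 1
    simp only [Complex.star_def, Complex.conj_ofReal, ← Complex.ofReal_mul,
      Real.mul_self_sqrt hc]
  rw [h]
  exact Matrix.posSemidef_conjTranspose_mul_self _

/-- if Alice's measurements have a compatibility structure containing the
star `K_{1,m-1}(x*)`, then for any state `ρ_AB` the observed assemblage
`σ^obs_{a|x} = Tr_A[(M_{a|x} ⊗ 𝕀)ρ]` is `K_{1,m-1}(x*)`-partially-unsteerable: for each
edge `(x*, x)` there are `τ^x_μ ⪰ 0` (indexed by deterministic responses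
`μ : Bool → ZMod d`, `false ↦ x*`, `true ↦ x`) with total trace 1 such that
`σ^obs_{a|z} = Σ_μ δ_{a,μ(z)} τ^x_μ` for `z ∈ {x*, x}`. -/
theorem star_compatible_assemblage_partially_unsteerable
    (d m nA nB : ℕ) [NeZero d] (hd : 2 ≤ d) (hm : 2 ≤ m)
    (M : Fin m → ZMod d → Matrix (Fin nA) (Fin nA) ℂ)
    (hpsd : ∀ x a, (M x a).PosSemidef)
    (hsum : ∀ x, ∑ a : ZMod d, M x a = 1)
    (ρ : Matrix (Fin nA × Fin nB) (Fin nA × Fin nB) ℂ)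
    (hρ : ρ.PosSemidef) (hρtr : ρ.trace = 1)
    (xs : Fin m)
    (hcomp : ∀ x, x ≠ xs → ∃ (L : ℕ) (G : Fin L → Matrix (Fin nA) (Fin nA) ℂ)
        (pr : Fin m → ZMod d → Fin L → ℝ),
      (∀ lam, (G lam).PosSemidef) ∧ (∑ lam, G lam = 1) ∧
      (∀ z a lam, 0 ≤ pr z a lam) ∧ (∀ z lam, ∑ a : ZMod d, pr z a lam = 1) ∧
      (∀ a, M xs a = ∑ lam, (pr xs a lam : ℂ) • G lam) ∧
      (∀ a, M x a = ∑ lam, (pr x a lam : ℂ) • G lam)) :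
    ∀ x, x ≠ xs → ∃ τ : (Bool → ZMod d) → Matrix (Fin nB) (Fin nB) ℂ,
      (∀ μ, (τ μ).PosSemidef) ∧
      (∑ μ : Bool → ZMod d, (τ μ).trace = 1) ∧
      (∀ a, assemblageOf (M xs a) ρ = ∑ μ : Bool → ZMod d, if μ false = a then τ μ else 0) ∧
      (∀ a, assemblageOf (M x a) ρ = ∑ μ : Bool → ZMod d, if μ true = a then τ μ else 0) := by
  intro x hx
  obtain ⟨L, G, pr, hGpsd, hGsum, hprnn, hprsum, hMxs, hMx⟩ := hcomp x hx
  have hq : ∀ (z : Fin m) (lam : Fin L), ∑ v : ZMod d, ((pr z v lam : ℝ) : ℂ) = 1 := by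
    intro z lam; exact_mod_cast hprsum z lam
  refine ⟨fun μ => ∑ lam, ((pr xs (μ false) lam * pr x (μ true) lam : ℝ) : ℂ) •
      assemblageOf (G lam) ρ, ?_, ?_, ?_, ?_⟩
  · intro μ
    refine Finset.sum_induction _ _ (fun a b ha hb => ha.add hb) Matrix.PosSemidef.zero ?_
    intro lam _
    exact posSemidef_real_smul (assemblageOf_posSemidef (hGpsd lam) hρ)
      (mul_nonneg (hprnn _ _ _) (hprnn _ _ _))
  · rw [← Matrix.trace_sum]
    have hτ : ∑ μ : Bool → ZMod d, ∑ lam,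
          ((pr xs (μ false) lam * pr x (μ true) lam : ℝ) : ℂ) • assemblageOf (G lam) ρ
        = assemblageOf 1 ρ := by
      rw [sum_boolFun]
      simp only [Bool.cond_false, Bool.cond_true]
      rw [sum_comm3 (g := fun u v lam =>
        ((pr xs u lam * pr x v lam : ℝ) : ℂ) • assemblageOf (G lam) ρ)]
      rw [← hGsum, show ∑ lam, G lam = ∑ lam, (1 : ℂ) • G lam by simp,
        assemblageOf_sum_smul]
      refine Finset.sum_congr rfl fun lam _ => ?_
      simp only [Complex.ofReal_mul, ← Finset.sum_smul]
      rw [← Finset.sum_mul_sum, hq, hq, one_mul]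
    rw [hτ, assemblageOf_one_trace, hρtr]
  · intro a
    rw [hMxs a, assemblageOf_sum_smul, sum_boolFun]
    simp only [Bool.cond_false, Bool.cond_true]
    rw [Finset.sum_comm]
    simp only [Finset.sum_ite_eq', Finset.mem_univ, if_true]
    rw [Finset.sum_comm]
    refine Finset.sum_congr rfl fun lam _ => ?_
    simp only [Complex.ofReal_mul, ← Finset.sum_smul, ← Finset.mul_sum, hq, mul_one]
  · intro a
    rw [hMx a, assemblageOf_sum_smul, sum_boolFun]
    simp only [Bool.cond_false, Bool.cond_true]
    simp only [Finset.sum_ite_eq', Finset.mem_univ, if_true]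
    rw [Finset.sum_comm]
    refine Finset.sum_congr rfl fun lam _ => ?_
    simp only [Complex.ofReal_mul, ← Finset.sum_smul, ← Finset.sum_mul, hq, one_mul]
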